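/- Let h : [0,τ]² → ℂ be C² with |h(t₁,t₂)| ≤ 1, |∂h/∂tᵢ| ≤ 5β, and |∂²h/∂t₁∂t₂| ≤ 25β² on [0,τ]². Let β' = max(β, 1/τ) and m ∈ ℤ \ {0}. Then |(1/τ²)∫₀^τ∫₀^τ h(t₁,t₂)e^{−im(t₁+t₂)} dt₁ dt₂| ≤ 49 β'²/m². -/

import Mathlib

open Set Complex

open intervalIntegral MeasureTheory
open scoped Interval
lemma normE (m : ℤ) (t : ℝ) : ‖Complex.exp (-Complex.I * m * t)‖ = 1 := by
  rw [Complex.norm_exp]; simp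

lemma contOnParam (τ : ℝ) (hτ : 0 < τ) (m : ℤ) (k : ℝ → ℝ → ℂ)
    (hk : ContinuousOn (fun p : ℝ × ℝ => k p.1 p.2) (Icc 0 τ ×ˢ Icc 0 τ))
    (C : ℝ) (hC : ∀ t₁ ∈ Icc 0 τ, ∀ t₂ ∈ Icc 0 τ, ‖k t₁ t₂‖ ≤ C) :
    ContinuousOn (fun x => ∫ t in (0:ℝ)..τ, k x t * Complex.exp (-Complex.I * m * t))
      (Icc (0:ℝ) τ) := by
  have hIoc : Ι (0:ℝ) τ ⊆ Icc 0 τ := fun t ht =>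
    Ioc_subset_Icc_self (uIoc_of_le hτ.le ▸ ht)
  have hEcont : Continuous fun t : ℝ => Complex.exp (-Complex.I * m * t) :=
    Complex.continuous_exp.comp (continuous_const.mul Complex.continuous_ofReal)
  have hslice : ∀ x ∈ Icc (0:ℝ) τ, ContinuousOn (fun t => k x t) (Icc 0 τ) := fun x hx =>
    hk.comp (continuous_const.prodMk continuous_id).continuousOn (fun t ht => ⟨hx, ht⟩)
  intro x₀ hx₀
  apply intervalIntegral.continuousWithinAt_of_dominated_interval (bound := fun _ => C)
  · filter_upwards [self_mem_nhdsWithin] with x hx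
    exact (((hslice x hx).mul hEcont.continuousOn).mono hIoc).aestronglyMeasurable
      measurableSet_uIoc
  · filter_upwards [self_mem_nhdsWithin] with x hx
    refine ae_of_all _ fun t ht => ?_
    rw [norm_mul, normE, mul_one]
    exact hC x hx t (hIoc ht)
  · exact intervalIntegrable_const
  · refine ae_of_all _ fun t ht => ?_
    have : ContinuousOn (fun x => k x t * Complex.exp (-Complex.I * m * t)) (Icc 0 τ) :=
      (hk.comp (continuous_id.prodMk continuous_const).continuousOn
        (fun x hx => ⟨hx, hIoc ht⟩)).mul continuousOn_const
    exact this x₀ hx₀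

lemma ibp (τ : ℝ) (hτ : 0 < τ) (m : ℤ) (hm : m ≠ 0) (f f' : ℝ → ℂ) (A B : ℝ)
    (hc : ContinuousOn f (Icc 0 τ))
    (hd : ∀ t ∈ Ioo 0 τ, HasDerivAt f (f' t) t)
    (hc' : ContinuousOn f' (Icc 0 τ))
    (hA : ∀ t ∈ Icc 0 τ, ‖f t‖ ≤ A)
    (hB : ∀ t ∈ Icc 0 τ, ‖f' t‖ ≤ B) :
    ‖∫ t in (0:ℝ)..τ, f t * Complex.exp (-Complex.I * m * t)‖ ≤ (2*A + B*τ)/|(m:ℝ)| := by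
  obtain ⟨c, hc_def⟩ : ∃ c : ℂ, c = -Complex.I * m := ⟨_, rfl⟩
  have hrw : ∀ t : ℝ, -Complex.I * (m:ℂ) * (t:ℂ) = c * t := by intro t; rw [hc_def]
  have hcne : c ≠ 0 := by
    rw [hc_def]
    simp [Complex.I_ne_zero, Complex.ext_iff]
    exact_mod_cast hm
  have hcnorm : ‖c‖ = |(m:ℝ)| := by rw [hc_def]; simp
  have hmpos : (0:ℝ) < |(m:ℝ)| := by
    have : (m:ℝ) ≠ 0 := by exact_mod_cast hm
    positivity
  have hEnorm : ∀ t : ℝ, ‖Complex.exp (c * t)‖ = 1 := by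
    intro t; rw [← hrw t]; exact normE m t
  have hE : ∀ t : ℝ, HasDerivAt (fun s : ℝ => Complex.exp (c * s)) (c * Complex.exp (c * t)) t := by
    intro t
    have h1 : HasDerivAt (fun s : ℝ => c * (s : ℂ)) c t := by
      simpa using (Complex.ofRealCLM.hasDerivAt (x := t)).const_mul c
    simpa [mul_comm] using h1.cexp
  have hEcont : Continuous fun t : ℝ => Complex.exp (c * t) :=
    Complex.continuous_exp.comp (continuous_const.mul Complex.continuous_ofReal)
  set G : ℝ → ℂ := fun t => f t * Complex.exp (c * t) / c with hG
  set φ : ℝ → ℂ := fun t => f t * Complex.exp (c * t) + c⁻¹ * (f' t * Complex.exp (c * t)) with hφ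
  have hGd : ∀ t ∈ Ioo 0 τ, HasDerivAt G (φ t) t := by
    intro t ht
    have := ((hd t ht).mul (hE t)).div_const c
    refine this.congr_deriv ?_
    rw [hφ]
    field_simp
    ring
  have hGc : ContinuousOn G (Icc 0 τ) := (hc.mul hEcont.continuousOn).div_const c
  have huIcc : uIcc (0:ℝ) τ = Icc 0 τ := uIcc_of_le hτ.le
  have hintfE : IntervalIntegrable (fun t => f t * Complex.exp (c * t)) volume 0 τ := by
    apply ContinuousOn.intervalIntegrable
    rw [huIcc]; exact hc.mul hEcont.continuousOn
  have hintf'E : IntervalIntegrable (fun t => f' t * Complex.exp (c * t)) volume 0 τ := by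
    apply ContinuousOn.intervalIntegrable
    rw [huIcc]; exact hc'.mul hEcont.continuousOn
  have hintφ : IntervalIntegrable φ volume 0 τ := hintfE.add (hintf'E.const_mul _)
  have hFTC : ∫ t in (0:ℝ)..τ, φ t = G τ - G 0 :=
    intervalIntegral.integral_eq_sub_of_hasDeriv_right_of_le hτ.le hGc
      (fun t ht => (hGd t ht).hasDerivWithinAt) hintφ
  have hsplit : ∫ t in (0:ℝ)..τ, φ t
      = (∫ t in (0:ℝ)..τ, f t * Complex.exp (c * t))
        + c⁻¹ * ∫ t in (0:ℝ)..τ, f' t * Complex.exp (c * t) := by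
    rw [hφ, intervalIntegral.integral_add hintfE (hintf'E.const_mul _),
      intervalIntegral.integral_const_mul]
  have hkey : (∫ t in (0:ℝ)..τ, f t * Complex.exp (c * t))
      = G τ - G 0 - c⁻¹ * ∫ t in (0:ℝ)..τ, f' t * Complex.exp (c * t) := by
    rw [← hFTC, hsplit]; ring
  have hGbound : ∀ t ∈ Icc 0 τ, ‖G t‖ ≤ A / |(m:ℝ)| := by
    intro t ht
    rw [hG]
    simp only [norm_div, norm_mul, hcnorm, hEnorm t, mul_one]
    gcongr
    exact hA t ht
  have hIbound : ‖∫ t in (0:ℝ)..τ, f' t * Complex.exp (c * t)‖ ≤ B * τ := by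
    have := intervalIntegral.norm_integral_le_of_norm_le_const
      (C := B) (f := fun t => f' t * Complex.exp (c * t)) (a := (0:ℝ)) (b := τ)
      (fun t ht => by
        rw [norm_mul, hEnorm t, mul_one]
        exact hB t (mem_Icc_of_Ioc ((uIoc_of_le hτ.le ▸ ht))))
    calc ‖∫ t in (0:ℝ)..τ, f' t * Complex.exp (c * t)‖ ≤ B * |τ - 0| := this
      _ = B * τ := by rw [sub_zero, abs_of_pos hτ]
  have hcinv : ‖c⁻¹‖ = |(m:ℝ)|⁻¹ := by rw [norm_inv, hcnorm]
  have hfinal : ‖∫ t in (0:ℝ)..τ, f t * Complex.exp (c * t)‖ ≤ (2*A + B*τ)/|(m:ℝ)| := by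
    rw [hkey]
    have h1 := norm_sub_le (G τ - G 0) (c⁻¹ * ∫ t in (0:ℝ)..τ, f' t * Complex.exp (c * t))
    have h2 := norm_sub_le (G τ) (G 0)
    rw [norm_mul, hcinv] at h1
    have h3 := hGbound τ ⟨hτ.le, le_rfl⟩
    have h4 := hGbound 0 ⟨le_rfl, hτ.le⟩
    have h5 : |(m:ℝ)|⁻¹ * ‖∫ t in (0:ℝ)..τ, f' t * Complex.exp (c * t)‖ ≤ |(m:ℝ)|⁻¹ * (B * τ) := by
      gcongr
    have h6 : A / |(m:ℝ)| + A / |(m:ℝ)| + |(m:ℝ)|⁻¹ * (B * τ) = (2*A + B*τ)/|(m:ℝ)| := by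
      field_simp; ring
    linarith
  calc ‖∫ t in (0:ℝ)..τ, f t * Complex.exp (-Complex.I * m * t)‖
      = ‖∫ t in (0:ℝ)..τ, f t * Complex.exp (c * t)‖ := by simp_rw [hrw]
    _ ≤ (2*A + B*τ)/|(m:ℝ)| := hfinal

/-- The oscillatory integral estimate from Lemma 3.7: if h is C² on [0,τ]² with
|h| ≤ 1, |∂h/∂tᵢ| ≤ 5β and |∂²h/∂t₁∂t₂| ≤ 25β², then with β' = max(β, 1/τ) and
any nonzero integer m,
|(1/τ²)∫₀^τ∫₀^τ h(t₁,t₂)e^{−im(t₁+t₂)}dt₁dt₂| ≤ 49β'²/m². -/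
theorem stmt7 (τ β : ℝ) (hτ : 0 < τ) (hβ : 0 < β)
    (h h₁ h₂ h₁₂ : ℝ → ℝ → ℂ)
    (hd1 : ∀ t₁ ∈ Icc 0 τ, ∀ t₂ ∈ Icc 0 τ, HasDerivAt (fun s => h s t₂) (h₁ t₁ t₂) t₁)
    (hd2 : ∀ t₁ ∈ Icc 0 τ, ∀ t₂ ∈ Icc 0 τ, HasDerivAt (fun s => h t₁ s) (h₂ t₁ t₂) t₂)
    (hd12 : ∀ t₁ ∈ Icc 0 τ, ∀ t₂ ∈ Icc 0 τ,
      HasDerivAt (fun s => h₁ t₁ s) (h₁₂ t₁ t₂) t₂)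
    (hcont : ContinuousOn (fun p : ℝ × ℝ => h p.1 p.2) (Icc 0 τ ×ˢ Icc 0 τ))
    (hcont1 : ContinuousOn (fun p : ℝ × ℝ => h₁ p.1 p.2) (Icc 0 τ ×ˢ Icc 0 τ))
    (hcont2 : ContinuousOn (fun p : ℝ × ℝ => h₂ p.1 p.2) (Icc 0 τ ×ˢ Icc 0 τ))
    (hcont12 : ContinuousOn (fun p : ℝ × ℝ => h₁₂ p.1 p.2) (Icc 0 τ ×ˢ Icc 0 τ))
    (hb : ∀ t₁ ∈ Icc 0 τ, ∀ t₂ ∈ Icc 0 τ, ‖h t₁ t₂‖ ≤ 1)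
    (hb1 : ∀ t₁ ∈ Icc 0 τ, ∀ t₂ ∈ Icc 0 τ, ‖h₁ t₁ t₂‖ ≤ 5 * β)
    (hb2 : ∀ t₁ ∈ Icc 0 τ, ∀ t₂ ∈ Icc 0 τ, ‖h₂ t₁ t₂‖ ≤ 5 * β)
    (hb12 : ∀ t₁ ∈ Icc 0 τ, ∀ t₂ ∈ Icc 0 τ, ‖h₁₂ t₁ t₂‖ ≤ 25 * β ^ 2)
    (m : ℤ) (hm : m ≠ 0) (β' : ℝ) (hβ' : β' = max β (1 / τ)) :
    ‖(1 / τ ^ 2 : ℂ) * ∫ t₁ in (0 : ℝ)..τ, ∫ t₂ in (0 : ℝ)..τ,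
        h t₁ t₂ * Complex.exp (-Complex.I * m * (t₁ + t₂))‖
      ≤ 49 * β' ^ 2 / (m : ℝ) ^ 2 := by
  have hIoc : Ι (0:ℝ) τ ⊆ Icc 0 τ := fun t ht =>
    Ioc_subset_Icc_self (uIoc_of_le hτ.le ▸ ht)
  have hmpos : (0:ℝ) < |(m:ℝ)| := by
    have : (m:ℝ) ≠ 0 := by exact_mod_cast hm
    positivity
  have hEcont : Continuous fun t : ℝ => Complex.exp (-Complex.I * m * t) :=
    Complex.continuous_exp.comp (continuous_const.mul Complex.continuous_ofReal)
  -- slices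
  have hsliceL : ∀ (k : ℝ → ℝ → ℂ),
      ContinuousOn (fun p : ℝ × ℝ => k p.1 p.2) (Icc 0 τ ×ˢ Icc 0 τ) →
      ∀ x ∈ Icc (0:ℝ) τ, ContinuousOn (fun t => k x t) (Icc 0 τ) := fun k hk x hx =>
    hk.comp (continuous_const.prodMk continuous_id).continuousOn (fun t ht => ⟨hx, ht⟩)
  set g : ℝ → ℂ := fun t₁ => ∫ t₂ in (0:ℝ)..τ, h t₁ t₂ * Complex.exp (-Complex.I * m * t₂)
    with hgdef
  set g' : ℝ → ℂ := fun t₁ => ∫ t₂ in (0:ℝ)..τ, h₁ t₁ t₂ * Complex.exp (-Complex.I * m * t₂)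
    with hg'def
  -- bounds on g, g' from inner integration by parts
  have hA : ∀ t₁ ∈ Icc (0:ℝ) τ, ‖g t₁‖ ≤ (2*1 + 5*β*τ)/|(m:ℝ)| := by
    intro t₁ ht₁
    exact ibp τ hτ m hm (h t₁) (h₂ t₁) 1 (5*β)
      (hsliceL h hcont t₁ ht₁)
      (fun t ht => hd2 t₁ ht₁ t (Ioo_subset_Icc_self ht))
      (hsliceL h₂ hcont2 t₁ ht₁)
      (hb t₁ ht₁) (hb2 t₁ ht₁)
  have hB : ∀ t₁ ∈ Icc (0:ℝ) τ, ‖g' t₁‖ ≤ (2*(5*β) + 25*β^2*τ)/|(m:ℝ)| := by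
    intro t₁ ht₁
    exact ibp τ hτ m hm (h₁ t₁) (h₁₂ t₁) (5*β) (25*β^2)
      (hsliceL h₁ hcont1 t₁ ht₁)
      (fun t ht => hd12 t₁ ht₁ t (Ioo_subset_Icc_self ht))
      (hsliceL h₁₂ hcont12 t₁ ht₁)
      (hb1 t₁ ht₁) (hb12 t₁ ht₁)
  -- continuity of g and g'
  have hgc : ContinuousOn g (Icc 0 τ) := contOnParam τ hτ m h hcont 1 hb
  have hg'c : ContinuousOn g' (Icc 0 τ) := contOnParam τ hτ m h₁ hcont1 (5*β) hb1
  -- derivative of g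
  have hgd : ∀ t₁ ∈ Ioo (0:ℝ) τ, HasDerivAt g (g' t₁) t₁ := by
    intro t₁ ht₁
    obtain ⟨ht₁0, ht₁τ⟩ := ht₁
    set ε : ℝ := min t₁ (τ - t₁) with hε
    have hεpos : 0 < ε := lt_min ht₁0 (by linarith)
    have hball : Metric.ball t₁ ε ⊆ Icc 0 τ := by
      intro x hx
      rw [Real.ball_eq_Ioo] at hx
      have h1 := min_le_left t₁ (τ - t₁)
      have h2 := min_le_right t₁ (τ - t₁)
      exact ⟨by linarith [hx.1], by linarith [hx.2]⟩
    have hmeas : ∀ x ∈ Icc (0:ℝ) τ, AEStronglyMeasurable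
        (fun t => h x t * Complex.exp (-Complex.I * m * t))
        (volume.restrict (Ι (0:ℝ) τ)) := fun x hx =>
      (((hsliceL h hcont x hx).mul hEcont.continuousOn).mono hIoc).aestronglyMeasurable
        measurableSet_uIoc
    have hmeas' : ∀ x ∈ Icc (0:ℝ) τ, AEStronglyMeasurable
        (fun t => h₁ x t * Complex.exp (-Complex.I * m * t))
        (volume.restrict (Ι (0:ℝ) τ)) := fun x hx =>
      (((hsliceL h₁ hcont1 x hx).mul hEcont.continuousOn).mono hIoc).aestronglyMeasurable
        measurableSet_uIoc
    have ht₁I : t₁ ∈ Icc (0:ℝ) τ := ⟨ht₁0.le, ht₁τ.le⟩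
    have := intervalIntegral.hasDerivAt_integral_of_dominated_loc_of_deriv_le
      (F := fun x t => h x t * Complex.exp (-Complex.I * m * t))
      (F' := fun x t => h₁ x t * Complex.exp (-Complex.I * m * t))
      (bound := fun _ => 5*β) (μ := volume) (a := (0:ℝ)) (b := τ)
      (Metric.ball_mem_nhds t₁ hεpos)
      (by filter_upwards [Metric.ball_mem_nhds t₁ hεpos] with x hx
          exact hmeas x (hball hx))
      (by apply ContinuousOn.intervalIntegrable
          rw [uIcc_of_le hτ.le]
          exact (hsliceL h hcont t₁ ht₁I).mul hEcont.continuousOn)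
      (hmeas' t₁ ht₁I)
      (ae_of_all _ fun t ht x hx => by
        rw [norm_mul, normE, mul_one]
        exact hb1 x (hball hx) t (hIoc ht))
      intervalIntegrable_const
      (ae_of_all _ fun t ht x hx =>
        (hd1 x (hball hx) t (hIoc ht)).mul_const _)
    exact this.2
  -- outer integration by parts
  have houter := ibp τ hτ m hm g g'
    ((2*1 + 5*β*τ)/|(m:ℝ)|) ((2*(5*β) + 25*β^2*τ)/|(m:ℝ)|)
    hgc hgd hg'c hA hB
  -- rewrite the double integral
  have hsplitexp : ∀ t₁ t₂ : ℝ, h t₁ t₂ * Complex.exp (-Complex.I * m * ((t₁:ℂ) + (t₂:ℂ)))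
      = (h t₁ t₂ * Complex.exp (-Complex.I * m * t₂)) * Complex.exp (-Complex.I * m * t₁) := by
    intro t₁ t₂
    rw [mul_add, Complex.exp_add]
    ring
  have hinner : ∀ t₁ : ℝ, (∫ t₂ in (0:ℝ)..τ,
      h t₁ t₂ * Complex.exp (-Complex.I * m * ((t₁:ℂ) + (t₂:ℂ))))
      = g t₁ * Complex.exp (-Complex.I * m * t₁) := by
    intro t₁
    simp_rw [hsplitexp t₁]
    rw [intervalIntegral.integral_mul_const]
  have hdouble : (∫ t₁ in (0:ℝ)..τ, ∫ t₂ in (0:ℝ)..τ,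
      h t₁ t₂ * Complex.exp (-Complex.I * m * ((t₁:ℂ) + (t₂:ℂ))))
      = ∫ t₁ in (0:ℝ)..τ, g t₁ * Complex.exp (-Complex.I * m * t₁) := by
    simp_rw [hinner]
  -- final arithmetic
  have hβ'1 : β ≤ β' := hβ' ▸ le_max_left _ _
  have hβ'2 : 1/τ ≤ β' := hβ' ▸ le_max_right _ _
  have hβ'pos : 0 < β' := lt_of_lt_of_le hβ hβ'1
  have hone : 1 ≤ β' * τ := by
    rw [div_le_iff₀ hτ] at hβ'2
    linarith
  have hm2 : (m:ℝ)^2 = |(m:ℝ)|^2 := (_root_.sq_abs _).symm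
  have hnorm1 : ‖(1 / τ ^ 2 : ℂ)‖ = 1/τ^2 := by
    simp [abs_of_pos hτ]
  rw [hdouble] at *
  calc ‖(1 / τ ^ 2 : ℂ) * ∫ t₁ in (0:ℝ)..τ, g t₁ * Complex.exp (-Complex.I * m * t₁)‖
      = (1/τ^2) * ‖∫ t₁ in (0:ℝ)..τ, g t₁ * Complex.exp (-Complex.I * m * t₁)‖ := by
        rw [norm_mul, hnorm1]
    _ ≤ (1/τ^2) * ((2*((2*1 + 5*β*τ)/|(m:ℝ)|) + ((2*(5*β) + 25*β^2*τ)/|(m:ℝ)|)*τ)/|(m:ℝ)|) :=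
        mul_le_mul_of_nonneg_left houter (by positivity)
    _ = (2 + 5*β*τ)^2 / (τ^2 * |(m:ℝ)|^2) := by
        field_simp
        ring
    _ ≤ 49 * β'^2 / (m:ℝ)^2 := by
        rw [hm2]
        have h7 : 2 + 5*β*τ ≤ 7*(β'*τ) := by nlinarith
        have h49 : (2 + 5*β*τ)^2 ≤ 49*β'^2*τ^2 := by
          have h8 := pow_le_pow_left₀ (by positivity : (0:ℝ) ≤ 2+5*β*τ) h7 2
          nlinarith [h8]
        rw [div_le_div_iff₀ (by positivity) (by positivity)]
        nlinarith [mul_le_mul_of_nonneg_right h49 (sq_nonneg (|(m:ℝ)|))]
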